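/- Implication inversion is admissible in G3iM^w: if Γ, φ→ψ ⇒ Δ is derivable, then Γ, ψ ⇒ Δ is derivable. -/
import Mathlib


/-- Formulas of intuitionistic (monotone) modal logic over atoms `ℕ`,
with conjunction, disjunction, implication, falsum and a box modality. -/
inductive Fm : Type where
  | atom : ℕ → Fm
  | bot  : Fm
  | and  : Fm → Fm → Fm
  | or   : Fm → Fm → Fm
  | imp  : Fm → Fm → Fm
  | box  : Fm → Fm
deriving DecidableEq

/-- `⊤` as the abbreviation `⊥ → ⊥`. -/
def Fm.top : Fm := Fm.imp Fm.bot Fm.bot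
/-- The sequent calculus `G3iM^w` for intuitionistic monotone modal logic:
single-conclusion sequents with a multiset antecedent. -/
inductive G3 : Multiset Fm → Fm → Prop
  | ax (Γ : Multiset Fm) (p : ℕ) : G3 (Fm.atom p ::ₘ Γ) (Fm.atom p)
  | lbot (Γ : Multiset Fm) (φ : Fm) : G3 (Fm.bot ::ₘ Γ) φ
  | land (Γ : Multiset Fm) (φ ψ θ : Fm) :
      G3 (φ ::ₘ ψ ::ₘ Γ) θ → G3 (φ.and ψ ::ₘ Γ) θ
  | rand (Γ : Multiset Fm) (φ ψ : Fm) : G3 Γ φ → G3 Γ ψ → G3 Γ (φ.and ψ)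
  | lor (Γ : Multiset Fm) (φ ψ θ : Fm) :
      G3 (φ ::ₘ Γ) θ → G3 (ψ ::ₘ Γ) θ → G3 (φ.or ψ ::ₘ Γ) θ
  | ror₁ (Γ : Multiset Fm) (φ ψ : Fm) : G3 Γ φ → G3 Γ (φ.or ψ)
  | ror₂ (Γ : Multiset Fm) (φ ψ : Fm) : G3 Γ ψ → G3 Γ (φ.or ψ)
  | limp (Γ : Multiset Fm) (φ ψ θ : Fm) :
      G3 (φ.imp ψ ::ₘ Γ) φ → G3 (ψ ::ₘ Γ) θ → G3 (φ.imp ψ ::ₘ Γ) θ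
  | rimp (Γ : Multiset Fm) (φ ψ : Fm) : G3 (φ ::ₘ Γ) ψ → G3 Γ (φ.imp ψ)
  | m (Γ : Multiset Fm) (φ ψ : Fm) : G3 {φ} ψ → G3 (φ.box ::ₘ Γ) (ψ.box)

theorem g3_perm {Γ Δ : Multiset Fm} {δ : Fm} (h : G3 Γ δ) (e : Γ = Δ) : G3 Δ δ := e ▸ h

theorem g3_aux (φ ψ : Fm) : ∀ {Δ δ}, G3 Δ δ → ∀ Γ, Δ = φ.imp ψ ::ₘ Γ → G3 (ψ ::ₘ Γ) δ := by
  intro Δ δ h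
  induction h with
  | ax Γ₀ p =>
    intro Γ hΓ
    rcases (Multiset.cons_eq_cons).1 hΓ with ⟨he, _⟩ | ⟨_, cs, h1, h2⟩
    · exact absurd he (by simp)
    · subst h2
      exact g3_perm (G3.ax _ p) (Multiset.cons_swap _ _ _).symm
  | lbot Γ₀ θ =>
    intro Γ hΓ
    rcases (Multiset.cons_eq_cons).1 hΓ with ⟨he, _⟩ | ⟨_, cs, h1, h2⟩
    · exact absurd he (by simp)
    · subst h2
      exact g3_perm (G3.lbot _ θ) (Multiset.cons_swap _ _ _).symm
  | land Γ₀ a b θ _ ih =>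
    intro Γ hΓ
    rcases (Multiset.cons_eq_cons).1 hΓ with ⟨he, _⟩ | ⟨_, cs, h1, h2⟩
    · exact absurd he (by simp)
    · subst h2; subst h1
      refine g3_perm (G3.land (ψ ::ₘ cs) a b θ ?_) (Multiset.cons_swap _ _ _).symm
      have := ih (a ::ₘ b ::ₘ cs) (by rw [Multiset.cons_swap b, Multiset.cons_swap a])
      exact g3_perm this (by rw [Multiset.cons_swap ψ a, Multiset.cons_swap ψ b])
  | rand Γ₀ a b _ _ ih1 ih2 =>
    intro Γ hΓ
    exact G3.rand _ a b (ih1 Γ hΓ) (ih2 Γ hΓ)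
  | lor Γ₀ a b θ _ _ ih1 ih2 =>
    intro Γ hΓ
    rcases (Multiset.cons_eq_cons).1 hΓ with ⟨he, _⟩ | ⟨_, cs, h1, h2⟩
    · exact absurd he (by simp)
    · subst h2; subst h1
      refine g3_perm (G3.lor (ψ ::ₘ cs) a b θ ?_ ?_) (Multiset.cons_swap _ _ _).symm
      · exact g3_perm (ih1 (a ::ₘ cs) (Multiset.cons_swap _ _ _)) (Multiset.cons_swap _ _ _)
      · exact g3_perm (ih2 (b ::ₘ cs) (Multiset.cons_swap _ _ _)) (Multiset.cons_swap _ _ _)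
  | ror₁ Γ₀ a b _ ih => intro Γ hΓ; exact G3.ror₁ _ a b (ih Γ hΓ)
  | ror₂ Γ₀ a b _ ih => intro Γ hΓ; exact G3.ror₂ _ a b (ih Γ hΓ)
  | limp Γ₀ a b θ _ hr ihl ihr =>
    intro Γ hΓ
    rcases (Multiset.cons_eq_cons).1 hΓ with ⟨he, h0⟩ | ⟨_, cs, h1, h2⟩
    · obtain ⟨rfl, rfl⟩ : a = φ ∧ b = ψ := by
        cases he; exact ⟨rfl, rfl⟩
      exact h0 ▸ hr
    · subst h2; subst h1
      refine g3_perm (G3.limp (ψ ::ₘ cs) a b θ ?_ ?_) (Multiset.cons_swap _ _ _).symm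
      · exact g3_perm (ihl (a.imp b ::ₘ cs) (Multiset.cons_swap _ _ _)) (Multiset.cons_swap _ _ _)
      · exact g3_perm (ihr (b ::ₘ cs) (Multiset.cons_swap _ _ _)) (Multiset.cons_swap _ _ _)
  | rimp Γ₀ a b _ ih =>
    intro Γ hΓ
    subst hΓ
    refine G3.rimp _ a b ?_
    exact g3_perm (ih (a ::ₘ Γ) (Multiset.cons_swap _ _ _)) (Multiset.cons_swap _ _ _)
  | m Γ₀ a b hp _ =>
    intro Γ hΓ
    rcases (Multiset.cons_eq_cons).1 hΓ with ⟨he, _⟩ | ⟨_, cs, h1, h2⟩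
    · exact absurd he (by simp)
    · subst h2
      exact g3_perm (G3.m (ψ ::ₘ cs) a b hp) (Multiset.cons_swap _ _ _).symm

/-- Implication inversion is admissible in `G3iM^w`. -/
theorem g3_imp_inversion (Γ : Multiset Fm) (φ ψ δ : Fm)
    (h : G3 (φ.imp ψ ::ₘ Γ) δ) : G3 (ψ ::ₘ Γ) δ :=
  g3_aux φ ψ h Γ rfl
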